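/- Let q be an odd prime power, let g ∈ 𝔽_q[x] be monic and irreducible of even degree, and let f = (x - a)² - b ∈ 𝔽_q[x] with a, b ∈ 𝔽_q. Then g ∘ f is irreducible over 𝔽_q if and only if g(-b) is not a square in 𝔽_q. -/

import Mathlib

open Polynomial

lemma norm_eq_pow_aux (F K : Type*) [Field F] [Fintype F] [Field K] [Fintype K] [Algebra F K]
    (x : K) :
    algebraMap F K (Algebra.norm F x) =
      x ^ (∑ i ∈ Finset.range (Module.finrank F K), Fintype.card F ^ i) := by
  classical
  set p := ringChar F with hp
  haveI : CharP F p := ringChar.charP F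
  haveI hpp : Fact p.Prime := ⟨CharP.char_is_prime F p⟩
  haveI : CharP K p := charP_of_injective_algebraMap (algebraMap F K).injective p
  obtain ⟨n, -, hn⟩ := FiniteField.card F p
  set q := Fintype.card F with hq
  -- the Frobenius x ↦ x ^ q as an F-algebra equivalence of K
  have hcomm : ∀ c : F, iterateFrobenius K p (n : ℕ) (algebraMap F K c) = algebraMap F K c := by
    intro c
    rw [iterateFrobenius_def, ← map_pow, ← hn, FiniteField.pow_card]
  set σh : K →ₐ[F] K := { (iterateFrobenius K p (n : ℕ)) with commutes' := hcomm } with hσh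
  have hσhinj : Function.Injective σh := σh.toRingHom.injective
  set σ : K ≃ₐ[F] K := AlgEquiv.ofBijective σh (Finite.injective_iff_bijective.mp hσhinj) with hσ
  have hσpow : ∀ (i : ℕ) (y : K), (σ ^ i) y = y ^ q ^ i := by
    intro i
    induction i with
    | zero => intro y; simp
    | succ i ih =>
      intro y
      rw [pow_succ', AlgEquiv.mul_apply, ih]
      show iterateFrobenius K p (n : ℕ) _ = _
      rw [iterateFrobenius_def, ← hn, ← pow_mul, pow_succ]
  haveI : Module.Finite F K := Module.finite_iff_finite.mpr inferInstance
  have hq1 : 1 < q := Fintype.one_lt_card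
  set d := Module.finrank F K with hdd
  have hcardK : Fintype.card K = q ^ d := Module.card_eq_pow_finrank
  have hker : ∀ k : ℕ, 0 < k → k < d → σ ^ k ≠ 1 := by
    intro k hk hkd hone
    obtain ⟨u, hu⟩ := IsCyclic.exists_generator (α := Kˣ)
    have horder : orderOf u = q ^ d - 1 := by
      rw [orderOf_eq_card_of_forall_mem_zpowers hu, Nat.card_eq_fintype_card, Fintype.card_units, hcardK]
    have h1 : ((u : K)) ^ q ^ k = (u : K) := by
      have := hσpow k (u : K)
      rw [hone] at this
      simpa using this.symm
    have h2 : u ^ (q ^ k - 1) = 1 := by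
      have hqk : 1 ≤ q ^ k := Nat.one_le_pow _ _ (by omega)
      have h3 : u ^ (q ^ k - 1) * u = 1 * u := by
        rw [one_mul, ← pow_succ]
        have : q ^ k - 1 + 1 = q ^ k := by omega
        rw [this]
        ext
        push_cast
        exact h1
      exact mul_right_cancel h3
    have h4 : q ^ d - 1 ∣ q ^ k - 1 := horder ▸ orderOf_dvd_of_pow_eq_one h2
    have h5 : 1 < q ^ k := by
      calc 1 < q := hq1
      _ ≤ q ^ k := Nat.le_self_pow (by omega) q
    have h6 : q ^ d - 1 ≤ q ^ k - 1 := Nat.le_of_dvd (by omega) h4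
    have h7 : q ^ d ≤ q ^ k := by
      have : 1 ≤ q ^ d := Nat.one_le_pow _ _ (by omega)
      omega
    have := (pow_le_pow_iff_right₀ hq1).mp h7
    omega
  have key : ∀ i j : ℕ, i ≤ j → j < d → σ ^ i = σ ^ j → i = j := by
    intro i j hij hjd he
    by_contra hne
    have h1 : σ ^ (j - i) * σ ^ i = 1 * σ ^ i := by
      rw [← pow_add, one_mul, Nat.sub_add_cancel hij, he]
    have h2 : σ ^ (j - i) = 1 := mul_right_cancel h1
    exact hker (j - i) (by omega) (by omega) h2
  have hbij : Function.Bijective (fun i : Fin d => σ ^ (i : ℕ)) := by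
    rw [Fintype.bijective_iff_injective_and_card]
    constructor
    · intro i j hij
      rcases le_total (i : ℕ) (j : ℕ) with hle | hle
      · exact Fin.ext (key i j hle j.isLt hij)
      · exact (Fin.ext (key j i hle i.isLt hij.symm)).symm
    · rw [Fintype.card_fin, ← Nat.card_eq_fintype_card, IsGalois.card_aut_eq_finrank]
  rw [Algebra.norm_eq_prod_automorphisms]
  rw [← Function.Bijective.prod_comp hbij (fun τ => τ x)]
  simp only [hσpow]
  rw [Finset.prod_pow_eq_pow_sum, ← Fin.sum_univ_eq_sum_range]

lemma isSquare_iff_isSquare_norm (F K : Type*) [Field F] [Fintype F] [Field K] [Fintype K]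
    [Algebra F K] (hchar : ringChar F ≠ 2) {x : K} (hx : x ≠ 0) :
    IsSquare x ↔ IsSquare (Algebra.norm F x) := by
  constructor
  · rintro ⟨t, rfl⟩; exact ⟨Algebra.norm F t, map_mul _ _ _⟩
  · intro hsq
    haveI : Module.Finite F K := Module.finite_iff_finite.mpr inferInstance
    have hcharK : ringChar K ≠ 2 := by
      rw [← Algebra.ringChar_eq F K]; exact hchar
    set q := Fintype.card F with hq
    set d := Module.finrank F K with hd
    set s := ∑ i ∈ Finset.range d, q ^ i with hs
    set m := q / 2 with hm
    have hqodd : q % 2 = 1 := FiniteField.odd_card_of_char_ne_two hchar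
    have hq1 : 1 < q := Fintype.one_lt_card
    have hqm : q = 2 * m + 1 := by omega
    have hgeom : ∀ e : ℕ, q ^ e = 2 * (m * (∑ i ∈ Finset.range e, q ^ i)) + 1 := by
      intro e; induction e with
      | zero => simp
      | succ e ih =>
        rw [Finset.sum_range_succ, pow_succ, ih, hqm]
        ring
    have hcardK : Fintype.card K = q ^ d := Module.card_eq_pow_finrank
    have hKd2 : Fintype.card K / 2 = m * s := by rw [hcardK, hgeom d, ← hs]; omega
    have hnormx : Algebra.norm F x ≠ 0 := Algebra.norm_ne_zero_iff.mpr hx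
    rw [FiniteField.isSquare_iff hcharK hx, hKd2]
    have h1 : (Algebra.norm F x) ^ m = 1 := (FiniteField.isSquare_iff hchar hnormx).mp hsq
    calc x ^ (m * s) = (x ^ s) ^ m := by rw [← pow_mul, mul_comm]
    _ = (algebraMap F K (Algebra.norm F x)) ^ m := by rw [norm_eq_pow_aux]
    _ = algebraMap F K ((Algebra.norm F x) ^ m) := (map_pow _ _ _).symm
    _ = 1 := by rw [h1, map_one]

/-- Let `𝔽_q` be a finite field of odd characteristic, `g` monic irreducible of even
degree, and `f = (x-a)² - b`. Then `g ∘ f` is irreducible iff `g(-b)` is not a square. -/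
theorem irred_comp_quadratic (F : Type*) [Field F] [Fintype F] (hchar : ringChar F ≠ 2)
    (g : F[X]) (hg : g.Monic) (hgirr : Irreducible g) (hdeg : Even g.natDegree)
    (a b : F) :
    Irreducible (g.comp ((X - C a) ^ 2 - C b)) ↔ ¬ IsSquare (g.eval (-b)) := by
  classical
  have hd0 : g.natDegree ≠ 0 := by
    intro h0
    exact hgirr.not_isUnit (hg.natDegree_eq_zero.mp h0 ▸ isUnit_one)
  have hd2 : 2 ≤ g.natDegree := by
    rcases hdeg with ⟨k, hk⟩; omega
  set d := g.natDegree with hd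
  set f : F[X] := (X - C a) ^ 2 - C b with hf
  have hfm : f.Monic := by unfold f; monicity!
  have hfd : f.natDegree = 2 := by unfold f; compute_degree!
  set h : F[X] := g.comp (X + C (-b)) with hh
  have hhm : h.Monic := hg.comp (monic_X_add_C _) (by rw [natDegree_X_add_C]; exact one_ne_zero)
  have hhd : h.natDegree = d := by
    rw [hh, natDegree_comp, natDegree_X_add_C, mul_one]
  have hhirr : Irreducible h := by
    have : h = algEquivAevalXAddC (-b : F) g := by
      rw [hh]; simp [algEquivAevalXAddC, comp_eq_aeval]
    rw [this]
    exact (MulEquiv.irreducible_iff (algEquivAevalXAddC (-b : F)).toMulEquiv).mpr hgirr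
  haveI : Fact (Irreducible h) := ⟨hhirr⟩
  have hhne : h ≠ 0 := hhm.ne_zero
  set K := AdjoinRoot h with hK
  set γ : K := AdjoinRoot.root h with hγ
  set pb := AdjoinRoot.powerBasis hhne with hpb
  haveI : Module.Finite F K := pb.finite
  haveI : Finite K := Module.finite_of_finite F
  haveI : Fintype K := Fintype.ofFinite K
  have hfinrank : Module.finrank F K = d := by
    rw [pb.finrank, hpb, AdjoinRoot.powerBasis_dim, hhd]
  have hminγ : minpoly F γ = h := by
    rw [hγ, AdjoinRoot.minpoly_root hhne, hhm.leadingCoeff, inv_one, map_one, mul_one]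
  have hcoeff : h.coeff 0 = g.eval (-b) := by
    rw [coeff_zero_eq_eval_zero, hh, eval_comp, eval_add, eval_X, eval_C, zero_add]
  have hnorm : Algebra.norm F γ = g.eval (-b) := by
    have hnn := Algebra.PowerBasis.norm_gen_eq_coeff_zero_minpoly pb
    rw [hpb, AdjoinRoot.powerBasis_gen, ← hγ, ← hpb] at hnn
    rw [hnn, hminγ, hcoeff, hpb, AdjoinRoot.powerBasis_dim, hhd]
    rw [(hdeg).neg_one_pow, one_mul]
  have hgeval : g.eval (-b) ≠ 0 := by
    intro h0
    obtain ⟨c, hc⟩ := dvd_iff_isRoot.mpr h0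
    rcases hgirr.isUnit_or_isUnit hc with hu | hu
    · exact not_isUnit_X_sub_C _ hu
    · have hcne : c ≠ 0 := hu.ne_zero
      have : g.natDegree = 1 := by
        rw [hc, natDegree_mul (X_sub_C_ne_zero _) hcne, natDegree_X_sub_C,
          natDegree_eq_zero_of_isUnit hu]
      omega
  have hγ0 : γ ≠ 0 := by
    intro h0
    rw [h0, Algebra.norm_zero] at hnorm
    exact hgeval hnorm.symm
  have hsq : IsSquare γ ↔ IsSquare (g.eval (-b)) := by
    rw [isSquare_iff_isSquare_norm F K hchar hγ0, hnorm]
  rw [iff_comm]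
  refine (not_congr hsq).symm.trans (iff_comm.mp ?_)
  constructor
  · intro hirr hsqγ
    obtain ⟨t, ht⟩ := hsqγ
    set α : K := algebraMap F K a + t with hα
    have hev : (aeval α) (g.comp f) = 0 := by
      rw [aeval_comp]
      have h1 : aeval α f = γ + algebraMap F K (-b) := by
        rw [hf]
        simp only [map_sub, map_pow, aeval_X, aeval_C, hα]
        rw [add_sub_cancel_left, sq, ← ht, map_neg]
        ring
      have h2 : (aeval (γ + algebraMap F K (-b))) g = aeval γ h := by
        show _ = aeval γ (g.comp (X + C (-b)))
        rw [aeval_comp, map_add, aeval_X, aeval_C]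
      rw [h1, h2, hγ, AdjoinRoot.aeval_eq, AdjoinRoot.mk_self]
    have hαint : IsIntegral F α := IsIntegral.of_finite F α
    obtain ⟨c, hc⟩ := minpoly.dvd F α hev
    rcases hirr.isUnit_or_isUnit hc with hu | hu
    · exact minpoly.not_isUnit F α hu
    · have hcne : c ≠ 0 := hu.ne_zero
      have h3 : (g.comp f).natDegree = (minpoly F α).natDegree := by
        rw [hc, natDegree_mul (minpoly.ne_zero hαint) hcne,
          natDegree_eq_zero_of_isUnit hu, add_zero]
      have h4 : (minpoly F α).natDegree ≤ d := hfinrank ▸ minpoly.natDegree_le α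
      have h5 : (g.comp f).natDegree = d * 2 := by rw [natDegree_comp, hfd]
      omega
  · intro hnsq
    set a' : K := algebraMap F K a with ha'
    set P : K[X] := (X - C a') ^ 2 - C γ with hP
    have hpm : P.Monic := by unfold P; monicity!
    have hpd : P.natDegree = 2 := by unfold P; compute_degree!
    have hpirr : Irreducible P := by
      rw [hpm.irreducible_iff_roots_eq_zero_of_degree_le_three (by omega) (by omega)]
      rw [Multiset.eq_zero_iff_forall_notMem]
      intro r hr
      rw [mem_roots hpm.ne_zero, IsRoot.def, hP] at hr
      simp only [eval_sub, eval_pow, eval_X, eval_C] at hr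
      exact hnsq ⟨r - a', by rw [← sq]; exact (sub_eq_zero.mp hr).symm⟩
    haveI : Fact (Irreducible P) := ⟨hpirr⟩
    have hPne : P ≠ 0 := hpm.ne_zero
    set L := AdjoinRoot P with hL
    set α : L := AdjoinRoot.root P with hαdef
    set pb2 := AdjoinRoot.powerBasis hPne with hpb2
    haveI : Module.Finite K L := pb2.finite
    haveI : Module.Finite F L := Module.Finite.trans K L
    have hrankKL : Module.finrank K L = 2 := by
      rw [pb2.finrank, hpb2, AdjoinRoot.powerBasis_dim, hpd]
    have hrankFL : Module.finrank F L = d * 2 := by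
      rw [← Module.finrank_mul_finrank F K L, hfinrank, hrankKL]
    have hroot : (α - algebraMap K L a') ^ 2 = algebraMap K L γ := by
      have h0 : aeval α P = 0 := by
        rw [hαdef]
        exact (AdjoinRoot.aeval_eq P).trans AdjoinRoot.mk_self
      have h1 : aeval α P = (α - algebraMap K L a') ^ 2 - algebraMap K L γ := by
        show aeval α ((X - C a') ^ 2 - C γ) = _
        simp only [map_sub, map_pow, aeval_X, aeval_C]
      rw [h1] at h0
      exact sub_eq_zero.mp h0
    have hev : (aeval α) (g.comp f) = 0 := by
      rw [aeval_comp]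
      have h1 : aeval α f = algebraMap K L (γ + algebraMap F K (-b)) := by
        rw [hf]
        simp only [map_sub, map_pow, aeval_X, aeval_C]
        rw [IsScalarTower.algebraMap_apply F K L, ← ha', hroot]
        rw [map_add, IsScalarTower.algebraMap_apply F K L, map_neg, map_neg]
        ring
      rw [h1, aeval_algebraMap_apply]
      have h2 : (aeval (γ + algebraMap F K (-b))) g = aeval γ h := by
        show _ = aeval γ (g.comp (X + C (-b)))
        rw [aeval_comp, map_add, aeval_X, aeval_C]
      rw [h2, hγ, AdjoinRoot.aeval_eq, AdjoinRoot.mk_self, map_zero]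
    have hαint : IsIntegral F α := IsIntegral.of_finite F α
    -- `α` generates `L` over `F`
    have htop : IntermediateField.adjoin F {α} = (⊤ : IntermediateField F L) := by
      rw [eq_top_iff]
      intro x hx
      clear hx
      have hαmem : α ∈ IntermediateField.adjoin F {α} :=
        IntermediateField.mem_adjoin_simple_self F α
      have hγ'mem : algebraMap K L γ ∈ IntermediateField.adjoin F {α} := by
        rw [← hroot]
        exact pow_mem (sub_mem hαmem (by
          rw [ha', ← IsScalarTower.algebraMap_apply F K L]
          exact IntermediateField.algebraMap_mem _ a)) 2
      have himg : ∀ c : K, algebraMap K L c ∈ IntermediateField.adjoin F {α} := by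
        intro c
        have h1 : Algebra.adjoin F ({γ} : Set K) = ⊤ := AdjoinRoot.adjoinRoot_eq_top
        have h2 : c ∈ Algebra.adjoin F ({γ} : Set K) := h1 ▸ Algebra.mem_top
        have h3 : (IsScalarTower.toAlgHom F K L) c ∈
            (Algebra.adjoin F ({γ} : Set K)).map (IsScalarTower.toAlgHom F K L) :=
          Subalgebra.mem_map.mpr ⟨c, h2, rfl⟩
        rw [AlgHom.map_adjoin, Set.image_singleton] at h3
        have h4 : Algebra.adjoin F ({(IsScalarTower.toAlgHom F K L) γ} : Set L) ≤
            (IntermediateField.adjoin F {α}).toSubalgebra := by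
          apply Algebra.adjoin_le
          intro y hy
          rw [Set.mem_singleton_iff] at hy
          subst hy
          exact hγ'mem
        exact h4 h3
      obtain ⟨Q, rfl⟩ := AdjoinRoot.mk_surjective x
      rw [← AdjoinRoot.aeval_eq, ← hαdef]
      induction Q using Polynomial.induction_on' with
      | add p q hp hq => rw [map_add]; exact add_mem hp hq
      | monomial n c =>
        rw [aeval_monomial]
        exact mul_mem (himg c) (pow_mem hαmem n)
    have hdegm : (minpoly F α).natDegree = d * 2 := by
      have h6 := IntermediateField.adjoin.finrank hαint
      rw [htop, IntermediateField.finrank_top', hrankFL] at h6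
      omega
    have hmono : (g.comp f).Monic := hg.comp hfm (by rw [hfd]; omega)
    obtain ⟨c, hc⟩ := minpoly.dvd F α hev
    have hcne : c ≠ 0 := by
      rintro rfl; rw [mul_zero] at hc; exact hmono.ne_zero hc
    have h5 : (g.comp f).natDegree = d * 2 := by rw [natDegree_comp, hfd]
    have h7 : (g.comp f).natDegree = (minpoly F α).natDegree + c.natDegree := by
      rw [hc, natDegree_mul (minpoly.ne_zero hαint) hcne]
    have hcdeg : c.natDegree = 0 := by omega
    have hlc : c.leadingCoeff = 1 := by
      have := congrArg leadingCoeff hc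
      rw [leadingCoeff_mul, hmono.leadingCoeff, (minpoly.monic hαint).leadingCoeff, one_mul]
        at this
      exact this.symm
    have hc1 : c = 1 := by
      rw [eq_C_of_natDegree_eq_zero hcdeg]
      rw [leadingCoeff, hcdeg] at hlc
      rw [hlc, map_one]
    rw [hc, hc1, mul_one]
    exact minpoly.irreducible hαint
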